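/- Let S₁, S₂ be signed graphs with adjacency matrices A₁ (n₁×n₁) and A₂ (n₂×n₂), and let A be the adjacency matrix of S₁ ⋆ₛ S₂, indexed by Fin n₁ ⊕ (Fin n₂ × Fin n₁). Suppose v ∈ ℝ^{n₂} satisfies A₂v = θv and j_{n₂}ᵀv = 0. Then for every w ∈ ℝ^{n₁}, the vector x defined by x(inl i) = 0 and x(inr (k,j)) = v_k·w_j satisfies A·x = θ·x; in particular, if v ≠ 0 and w ≠ 0, then θ is an eigenvalue of A, and the θ-eigenspace of A has dimension at least n₁·(dimension of {v : A₂v = θv and j_{n₂}ᵀv = 0}). -/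

import Mathlib

open Matrix BigOperators Kronecker

/-- A signed graph on vertex set `V` is represented by its adjacency matrix: a real symmetric
matrix with zero diagonal and all entries in `{-1, 0, 1}`. -/
def IsSignedAdj {V : Type*} (A : Matrix V V ℝ) : Prop :=
  A.IsHermitian ∧ (∀ i, A i i = 0) ∧ ∀ i j, A i j = -1 ∨ A i j = 0 ∨ A i j = 1

/-- The adjacency matrix of the s-neighbourhood corona `S₁ ⋆ₛ S₂`:
the block matrix `[[A₁, jᵀ ⊗ A₁], [(jᵀ ⊗ A₁)ᵀ, A₂ ⊗ I]]`, indexed by `Fin n₁ ⊕ (V × Fin n₁)`. -/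
def coronaAdj {n₁ : ℕ} {V : Type*} [DecidableEq V]
    (A₁ : Matrix (Fin n₁) (Fin n₁) ℝ) (A₂ : Matrix V V ℝ) :
    Matrix (Fin n₁ ⊕ V × Fin n₁) (Fin n₁ ⊕ V × Fin n₁) ℝ :=
  Matrix.fromBlocks A₁ (Matrix.of fun i p => A₁ i p.2) (Matrix.of fun p j => A₁ p.2 j)
    (A₂ ⊗ₖ (1 : Matrix (Fin n₁) (Fin n₁) ℝ))

lemma corona_key {n₁ n₂ : ℕ}
    (A₁ : Matrix (Fin n₁) (Fin n₁) ℝ) (A₂ : Matrix (Fin n₂) (Fin n₂) ℝ)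
    (θ : ℝ) (y : Fin n₂ × Fin n₁ → ℝ)
    (h1 : ∀ j, A₂.mulVec (fun k => y (k, j)) = θ • fun k => y (k, j))
    (h2 : ∀ j, ∑ k, y (k, j) = 0) :
    (coronaAdj A₁ A₂).mulVec (Sum.elim (fun _ : Fin n₁ => (0:ℝ)) y)
      = θ • Sum.elim (fun _ : Fin n₁ => (0:ℝ)) y := by
  funext a
  cases a with
  | inl i =>
    simp only [Matrix.mulVec, dotProduct, coronaAdj, Fintype.sum_sum_type,
      Matrix.fromBlocks_apply₁₁, Matrix.fromBlocks_apply₁₂, Sum.elim_inl, Sum.elim_inr,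
      Pi.smul_apply, smul_eq_mul, Matrix.of_apply, mul_zero, Finset.sum_const_zero, zero_add]
    rw [Fintype.sum_prod_type, Finset.sum_comm]
    calc ∑ j, ∑ k, A₁ i j * y (k, j)
        = ∑ j : Fin n₁, A₁ i j * ∑ k, y (k, j) := by
          simp [Finset.mul_sum]
      _ = 0 := by simp [h2]
  | inr p =>
    obtain ⟨k, j⟩ := p
    have hc := congrFun (h1 j) k
    simp only [Matrix.mulVec, dotProduct, Pi.smul_apply, smul_eq_mul] at hc
    simp only [Matrix.mulVec, dotProduct, coronaAdj, Fintype.sum_sum_type,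
      Matrix.fromBlocks_apply₂₁, Matrix.fromBlocks_apply₂₂, Sum.elim_inl, Sum.elim_inr,
      Pi.smul_apply, smul_eq_mul, Matrix.of_apply, mul_zero, Finset.sum_const_zero, zero_add]
    rw [Fintype.sum_prod_type]
    calc ∑ k', ∑ j', (A₂ ⊗ₖ (1 : Matrix (Fin n₁) (Fin n₁) ℝ)) (k, j) (k', j') * y (k', j')
        = ∑ k', A₂ k k' * y (k', j) := by
          apply Finset.sum_congr rfl
          intro k' _
          simp [Matrix.kroneckerMap_apply, Matrix.one_apply, mul_ite, ite_mul,
            Finset.sum_ite_eq]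
      _ = θ * y (k, j) := hc

/-- If `A₂ v = θ v` and `jᵀ v = 0`, then for every `w` the vector `x` with `x(inl i) = 0` and
`x(inr (k,j)) = v_k w_j` satisfies `A x = θ x`, where `A` is the adjacency matrix of
`S₁ ⋆ₛ S₂`; in particular, if `v ≠ 0` and `w ≠ 0` then `θ` is an eigenvalue of `A` and the
`θ`-eigenspace of `A` has dimension at least `n₁ · dim {v : A₂ v = θ v, jᵀ v = 0}`. -/
theorem corona_adj_eigenvector {n₁ n₂ : ℕ}
    (A₁ : Matrix (Fin n₁) (Fin n₁) ℝ) (A₂ : Matrix (Fin n₂) (Fin n₂) ℝ)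
    (h₁ : IsSignedAdj A₁) (h₂ : IsSignedAdj A₂)
    (θ : ℝ) (v : Fin n₂ → ℝ)
    (hv : A₂.mulVec v = θ • v) (hsum : ∑ k, v k = 0) :
    (∀ w : Fin n₁ → ℝ,
        (coronaAdj A₁ A₂).mulVec
            (Sum.elim (fun _ : Fin n₁ => (0 : ℝ)) fun p : Fin n₂ × Fin n₁ => v p.1 * w p.2)
          = θ • Sum.elim (fun _ : Fin n₁ => (0 : ℝ)) fun p : Fin n₂ × Fin n₁ => v p.1 * w p.2)
    ∧ (v ≠ 0 → ∀ w : Fin n₁ → ℝ, w ≠ 0 →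
        Module.End.HasEigenvalue (Matrix.toLin' (coronaAdj A₁ A₂)) θ
        ∧ ∀ W : Submodule ℝ (Fin n₂ → ℝ),
            (∀ u, u ∈ W ↔ A₂.mulVec u = θ • u ∧ ∑ k, u k = 0) →
            n₁ * Module.finrank ℝ W ≤
              Module.finrank ℝ (Module.End.eigenspace (Matrix.toLin' (coronaAdj A₁ A₂)) θ)) := by
  have main : ∀ w : Fin n₁ → ℝ,
      (coronaAdj A₁ A₂).mulVec
          (Sum.elim (fun _ : Fin n₁ => (0 : ℝ)) fun p : Fin n₂ × Fin n₁ => v p.1 * w p.2)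
        = θ • Sum.elim (fun _ : Fin n₁ => (0 : ℝ)) fun p : Fin n₂ × Fin n₁ => v p.1 * w p.2 := by
    intro w
    apply corona_key
    · intro j
      have : (fun k => v k * w j) = w j • v := by
        funext k; simp [mul_comm]
      rw [this, Matrix.mulVec_smul, hv, smul_comm]
    · intro j
      simp [← Finset.sum_mul, hsum]
  refine ⟨main, ?_⟩
  intro hv0 w hw0
  constructor
  · -- eigenvalue
    apply Module.End.hasEigenvalue_of_hasEigenvector (x := Sum.elim (fun _ : Fin n₁ => (0 : ℝ))
      fun p : Fin n₂ × Fin n₁ => v p.1 * w p.2)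
    constructor
    · rw [Module.End.mem_eigenspace_iff, Matrix.toLin'_apply]
      exact main w
    · intro hx
      obtain ⟨k, hk⟩ := Function.ne_iff.1 hv0
      obtain ⟨j, hj⟩ := Function.ne_iff.1 hw0
      have := congrFun hx (Sum.inr (k, j))
      simp only [Sum.elim_inr, Pi.zero_apply] at this
      exact (mul_ne_zero hk hj) this
  · intro W hW
    -- build an injective linear map (Fin n₁ → W) →ₗ eigenspace
    set E := Module.End.eigenspace (Matrix.toLin' (coronaAdj A₁ A₂)) θ with hE
    let L : (Fin n₁ → W) →ₗ[ℝ] (Fin n₁ ⊕ Fin n₂ × Fin n₁ → ℝ) :=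
      { toFun := fun f => Sum.elim (fun _ : Fin n₁ => (0 : ℝ))
          fun p : Fin n₂ × Fin n₁ => (f p.2 : Fin n₂ → ℝ) p.1
        map_add' := by
          intro f g
          funext a
          cases a with
          | inl i => simp
          | inr p => simp
        map_smul' := by
          intro c f
          funext a
          cases a with
          | inl i => simp
          | inr p => simp }
    have hL : ∀ f, L f ∈ E := by
      intro f
      rw [hE, Module.End.mem_eigenspace_iff, Matrix.toLin'_apply]
      apply corona_key
      · intro j
        exact ((hW _).1 (f j).2).1
      · intro j
        exact ((hW _).1 (f j).2).2
    let Ψ : (Fin n₁ → W) →ₗ[ℝ] E := LinearMap.codRestrict E L hL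
    have hΨ : Function.Injective Ψ := by
      rw [← LinearMap.ker_eq_bot]
      rw [Submodule.eq_bot_iff]
      intro f hf
      have hf' : L f = 0 := by
        have := congrArg (Subtype.val) hf
        simpa [Ψ, LinearMap.codRestrict] using this
      funext j
      ext k
      have := congrFun hf' (Sum.inr (k, j))
      simpa [L] using this
    have hfin : Module.finrank ℝ (Fin n₁ → W) = n₁ * Module.finrank ℝ W := by
      rw [Module.finrank_pi_fintype]
      simp [Finset.sum_const, mul_comm]
    calc n₁ * Module.finrank ℝ W = Module.finrank ℝ (Fin n₁ → W) := hfin.symm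
      _ ≤ Module.finrank ℝ E := LinearMap.finrank_le_finrank_of_injective hΨ
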